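/- Let K ≥ 2 be an integer and N ≥ 1 an odd natural number. Over nonnegative integer variables n_1, …, n_K satisfying Σ_{k=1}^{K} n_k = N, the greatest value of Σ_{k=2}^{K} n_k n_{k−1} + n_K is (N+1)²/4, attained at n_k = 0 for all k ≤ K−2, n_{K−1} = (N−1)/2, and n_K = (N+1)/2. -/

import Mathlib

/-- For `K ≥ 2` and an odd natural number `N ≥ 1`, the greatest value of
`Σ_{k=2}^K n_k n_{k-1} + n_K` over natural numbers `n_1, …, n_K` summing to `N`
is `(N+1)^2/4`, attained at `n_k = 0` for `k ≤ K-2`, `n_{K-1} = (N-1)/2`, `n_K = (N+1)/2`. -/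
theorem qp_max_nat_odd (K : ℕ) (hK : 2 ≤ K) (N : ℕ) (hN : 1 ≤ N) (hodd : Odd N)
    (x : ℕ → ℕ)
    (hxdef : ∀ k, x k = if k = K then (N + 1) / 2 else if k = K - 1 then (N - 1) / 2 else 0) :
    IsGreatest
      {v : ℕ | ∃ y : ℕ → ℕ, (∑ k ∈ Finset.Icc 1 K, y k) = N ∧
        v = (∑ k ∈ Finset.Icc 2 K, y k * y (k - 1)) + y K}
      ((N + 1) ^ 2 / 4) ∧
    (∑ k ∈ Finset.Icc 1 K, x k) = N ∧
    (∑ k ∈ Finset.Icc 2 K, x k * x (k - 1)) + x K = (N + 1) ^ 2 / 4 := by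
  obtain ⟨m, hm⟩ := hodd
  have hval : (N + 1) ^ 2 / 4 = (m + 1) ^ 2 := by
    have : (N + 1) ^ 2 = 4 * (m + 1) ^ 2 := by subst hm; ring
    omega
  have hxK : x K = m + 1 := by rw [hxdef]; simp; omega
  have hxK1 : x (K - 1) = m := by
    rw [hxdef]; rw [if_neg (by omega), if_pos rfl]; omega
  have hx0 : ∀ k, k ≠ K → k ≠ K - 1 → x k = 0 := by
    intro k h1 h2; rw [hxdef, if_neg h1, if_neg h2]
  -- sum of x
  have hsub : ({K - 1, K} : Finset ℕ) ⊆ Finset.Icc 1 K := by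
    intro k hk; simp at hk; simp [Finset.mem_Icc]; omega
  have hsum : (∑ k ∈ Finset.Icc 1 K, x k) = N := by
    rw [← Finset.sum_subset hsub (fun i hi hni => by
      simp at hni; exact hx0 i hni.2 hni.1)]
    rw [Finset.sum_pair (by omega : K - 1 ≠ K), hxK, hxK1]; omega
  -- objective at x
  have hobj : (∑ k ∈ Finset.Icc 2 K, x k * x (k - 1)) + x K = (N + 1) ^ 2 / 4 := by
    have hs : (∑ k ∈ Finset.Icc 2 K, x k * x (k - 1)) = x K * x (K - 1) := by
      apply Finset.sum_eq_single_of_mem K (by simp [Finset.mem_Icc]; omega)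
      intro b hb hbK
      simp [Finset.mem_Icc] at hb
      rcases eq_or_ne b (K - 1) with h | h
      · have : x (b - 1) = 0 := hx0 _ (by omega) (by omega)
        rw [this, mul_zero]
      · rw [hx0 b hbK h, zero_mul]
    rw [hs, hxK, hxK1, hval]; ring
  -- upper bound
  have hub : ∀ y : ℕ → ℕ, (∑ k ∈ Finset.Icc 1 K, y k) = N →
      (∑ k ∈ Finset.Icc 2 K, y k * y (k - 1)) + y K ≤ (N + 1) ^ 2 / 4 := by
    intro y hy
    set A := (Finset.Icc 1 K).filter (fun k => k % 2 = K % 2) with hA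
    set B := (Finset.Icc 1 K).filter (fun k => ¬ k % 2 = K % 2) with hB
    have hEO : (∑ k ∈ A, y k) + (∑ k ∈ B, y k) = N := by
      rw [hA, hB, Finset.sum_filter_add_sum_filter_not, hy]
    have hKA : K ∈ A := by simp [hA, Finset.mem_Icc]; omega
    have hyK : y K ≤ ∑ k ∈ A, y k :=
      Finset.single_le_sum (fun i _ => Nat.zero_le (y i)) hKA
    set g : ℕ → ℕ × ℕ := fun k => if k % 2 = K % 2 then (k, k - 1) else (k - 1, k) with hg
    have hginj : Set.InjOn g (Finset.Icc 2 K) := by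
      intro a ha b hb hab
      simp [Finset.mem_coe, Finset.mem_Icc] at ha hb
      simp only [hg] at hab
      split_ifs at hab <;> rw [Prod.ext_iff] at hab <;> omega
    have himg : (Finset.Icc 2 K).image g ⊆ A ×ˢ B := by
      intro p hp
      simp only [Finset.mem_image] at hp
      obtain ⟨k, hk, hpk⟩ := hp
      simp [Finset.mem_Icc] at hk
      subst hpk
      simp only [hg, Finset.mem_product, hA, hB, Finset.mem_filter, Finset.mem_Icc]
      split_ifs with h <;> refine ⟨⟨?_, ?_⟩, ?_, ?_⟩ <;> omega
    have hmain : (∑ k ∈ Finset.Icc 2 K, y k * y (k - 1))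
        ≤ (∑ k ∈ A, y k) * (∑ k ∈ B, y k) := by
      have h1 : (∑ k ∈ Finset.Icc 2 K, y k * y (k - 1))
          = ∑ p ∈ (Finset.Icc 2 K).image g, y p.1 * y p.2 := by
        rw [Finset.sum_image (fun a ha b hb hab => hginj ha hb hab)]
        apply Finset.sum_congr rfl
        intro k hk
        simp only [hg]
        split_ifs <;> simp [mul_comm]
      rw [h1, Finset.sum_mul_sum, ← Finset.sum_product']
      exact Finset.sum_le_sum_of_subset himg
    calc (∑ k ∈ Finset.Icc 2 K, y k * y (k - 1)) + y K
        ≤ (∑ k ∈ A, y k) * (∑ k ∈ B, y k) + (∑ k ∈ A, y k) :=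
          add_le_add hmain hyK
      _ = (∑ k ∈ A, y k) * ((∑ k ∈ B, y k) + 1) := by ring
      _ ≤ (N + 1) ^ 2 / 4 := by
          rw [Nat.le_div_iff_mul_le (by norm_num)]
          set E := ∑ k ∈ A, y k
          set O := ∑ k ∈ B, y k
          have hEOz : (E : ℤ) + (O : ℤ) = N := by exact_mod_cast hEO
          zify
          nlinarith [sq_nonneg ((E : ℤ) - (O + 1)), hEOz]
  refine ⟨⟨⟨x, hsum, hobj.symm⟩, ?_⟩, hsum, hobj⟩
  rintro v ⟨y, hy, rfl⟩
  exact hub y hy
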